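/- Let Ψ ∈ ℝ^{n×k} and Φ ∈ ℝ^{n×k} both have full column rank, and suppose Φ⁺ = (ΨᵀΦ)⁻¹ Ψᵀ (in particular ΨᵀΦ is invertible). Then the ranges of Ψ and Φ coincide: Ran(Ψ) = Ran(Φ). -/

import Mathlib

open Matrix

lemma isUnit_det_of_rank_eq {k : ℕ} (M : Matrix (Fin k) (Fin k) ℝ) (h : M.rank = k) :
    IsUnit M.det := by
  rw [← isUnit_iff_isUnit_det, ← mulVec_surjective_iff_isUnit]
  have hrange : LinearMap.range M.mulVecLin = ⊤ := by
    apply Submodule.eq_top_of_finrank_eq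
    simpa [Matrix.rank] using h.trans (Module.finrank_fin_fun ℝ).symm
  intro v
  exact (LinearMap.range_eq_top.mp hrange) v

/-- If `Ψ, Φ ∈ ℝ^{n×k}` both have full column rank, `ΨᵀΦ` is invertible,
and `Φ⁺ = (ΨᵀΦ)⁻¹ Ψᵀ`, then `Ran(Ψ) = Ran(Φ)`. -/
theorem ranges_coincide {n k : ℕ} (Ψ Φ : Matrix (Fin n) (Fin k) ℝ)
    (hΨ : Ψ.rank = k) (hΦ : Φ.rank = k)
    (hinv : IsUnit (Ψᵀ * Φ).det)
    (hcond : (Φᵀ * Φ)⁻¹ * Φᵀ = (Ψᵀ * Φ)⁻¹ * Ψᵀ) :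
    LinearMap.range Ψ.mulVecLin = LinearMap.range Φ.mulVecLin := by
  have hGram : IsUnit (Φᵀ * Φ).det :=
    isUnit_det_of_rank_eq _ ((rank_transpose_mul_self Φ).trans hΦ)
  -- multiply hcond on the left by (ΨᵀΦ)
  have h1 : (Ψᵀ * Φ) * ((Φᵀ * Φ)⁻¹ * Φᵀ) = Ψᵀ := by
    rw [hcond, ← Matrix.mul_assoc, Matrix.mul_nonsing_inv _ hinv, Matrix.one_mul]
  -- transpose: Φ * M = Ψ with M := ((ΦᵀΦ)⁻¹)ᵀ * (ΦᵀΨ)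
  set M : Matrix (Fin k) (Fin k) ℝ := ((Φᵀ * Φ)⁻¹)ᵀ * (Φᵀ * Ψ) with hM
  have h2 : Φ * M = Ψ := by
    have := congrArg Matrix.transpose h1
    simpa [Matrix.transpose_mul, Matrix.mul_assoc, hM] using this
  have hMunit : IsUnit M.det := by
    have h3 : IsUnit ((Φᵀ * Φ)⁻¹)ᵀ.det := by
      rw [Matrix.det_transpose]
      exact (Matrix.isUnit_nonsing_inv_det_iff).mpr hGram
    have h4 : IsUnit (Φᵀ * Ψ).det := by
      have : (Φᵀ * Ψ) = (Ψᵀ * Φ)ᵀ := by simp [Matrix.transpose_mul]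
      rw [this, Matrix.det_transpose]; exact hinv
    rw [hM, Matrix.det_mul]
    exact h3.mul h4
  have hsurj : Function.Surjective M.mulVecLin := by
    simpa [Matrix.coe_mulVecLin] using
      (Matrix.mulVec_surjective_iff_isUnit.mpr ((Matrix.isUnit_iff_isUnit_det M).mpr hMunit))
  calc LinearMap.range Ψ.mulVecLin
      = LinearMap.range (Φ * M).mulVecLin := by rw [h2]
    _ = LinearMap.range (Φ.mulVecLin ∘ₗ M.mulVecLin) := by rw [Matrix.mulVecLin_mul]
    _ = LinearMap.range Φ.mulVecLin := LinearMap.range_comp_of_range_eq_top _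
          (LinearMap.range_eq_top.mpr hsurj)
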